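/- Let n ≥ 1 and define the discrete cosine transforms DCT-II and DCT-III on ℝ^n by (C₂ f)_k = 2 · Σ_{j=0}^{n−1} f_j · cos(π (j + 1/2) k / n) and (C₃ g)_k = g_0 + 2 · Σ_{j=1}^{n−1} g_j · cos(π j (k + 1/2) / n), for k = 0,…,n−1. Then for every f ∈ ℝ^n, C₃(C₂ f) = 2n · f; that is, DCT-III inverts DCT-II up to the normalization factor 2n. -/

import Mathlib

open Real

lemma sum_cos_int (n : ℕ) (hn : 0 < n) (r : ℤ) (hr : ¬ ((2 * n : ℤ) ∣ r)) :
    ∑ j ∈ Finset.range n, Real.cos (π * j * r / n) = if Odd r then 1 else 0 := by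
  set z : ℂ := Complex.exp ((π * r / n : ℝ) * Complex.I) with hz
  have hn0 : (n : ℝ) ≠ 0 := Nat.cast_ne_zero.mpr hn.ne'
  have hterm : ∀ j : ℕ, Real.cos (π * j * r / n) = (z ^ j).re := by
    intro j
    rw [hz, ← Complex.exp_nat_mul]
    have : (j : ℂ) * (((π * r / n : ℝ)) * Complex.I)
        = ((π * j * r / n : ℝ) : ℂ) * Complex.I := by
      push_cast; ring
    rw [this, Complex.exp_ofReal_mul_I_re]
  have hz1 : z ≠ 1 := by
    intro h
    rw [hz, Complex.exp_eq_one_iff] at h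
    obtain ⟨m, hm⟩ := h
    have h2 := congrArg Complex.im hm
    simp [Complex.mul_im, Complex.ofReal_im, Complex.ofReal_re] at h2
    have hre : (π * r / n : ℝ) = m * (2 * π) := by
      linear_combination h2
    have : (r : ℝ) = 2 * m * n := by
      field_simp at hre
      have hπ : (π : ℝ) ≠ 0 := Real.pi_ne_zero
      nlinarith [hre, Real.pi_pos]
    have hr' : r = 2 * m * n := by exact_mod_cast this
    exact hr ⟨m, by rw [hr']; ring⟩
  have hzn : z ^ n = (-1 : ℂ) ^ r := by
    rw [hz, ← Complex.exp_nat_mul]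
    have hnC : (n : ℂ) ≠ 0 := Nat.cast_ne_zero.mpr hn.ne'
    have : (n : ℂ) * (((π * r / n : ℝ)) * Complex.I) = r * (π * Complex.I) := by
      push_cast
      field_simp
    rw [this, Complex.exp_int_mul, Complex.exp_pi_mul_I]
  have hsum : (∑ j ∈ Finset.range n, (z ^ j)) = (z ^ n - 1) / (z - 1) := geom_sum_eq hz1 n
  have hmain : ∑ j ∈ Finset.range n, Real.cos (π * j * r / n)
      = ((z ^ n - 1) / (z - 1)).re := by
    rw [← hsum, Complex.re_sum]
    exact Finset.sum_congr rfl fun j _ => hterm j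
  rcases Int.even_or_odd r with he | ho
  · have : z ^ n = 1 := by rw [hzn, he.neg_one_zpow]
    rw [hmain, this]
    simp [Int.not_odd_iff_even.mpr he]
  · have hzn' : z ^ n = -1 := by rw [hzn, ho.neg_one_zpow]
    rw [hmain, hzn', if_pos ho]
    -- (-1 - 1)/(z-1) = 2/(1-z)
    have hz1' : (1 : ℂ) - z ≠ 0 := fun h => hz1 (by linear_combination -h)
    have hzsub : z - 1 ≠ 0 := fun h => hz1 (by linear_combination h)
    have hw : ((-1 : ℂ) - 1) / (z - 1) = 2 / (1 - z) := by
      field_simp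
      ring
    rw [hw]
    -- compute real part using conj
    have hzabs : ‖z‖ = 1 := by
      rw [hz]; exact Complex.norm_exp_ofReal_mul_I _
    have hz0 : z ≠ 0 := by
      intro h; rw [h] at hzabs; simp at hzabs
    have hconj : (starRingEnd ℂ) z = z⁻¹ := Complex.inv_eq_conj hzabs ▸ rfl
    have hinv1 : (1 : ℂ) - z⁻¹ ≠ 0 := by
      intro h
      have : z⁻¹ = 1 := by linear_combination -h
      exact hz1 (by rw [← inv_inv z, this, inv_one])
    have key : (2 / (1 - z)) + (starRingEnd ℂ) (2 / (1 - z)) = 2 := by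
      rw [map_div₀, map_sub, map_one, hconj, map_ofNat]
      field_simp
      ring
    have := Complex.add_conj (2 / (1 - z))
    rw [key] at this
    have : (2 : ℂ) = ((2 * (2 / (1 - z)).re : ℝ) : ℂ) := by exact_mod_cast this
    have h2 : (2 : ℝ) = 2 * (2 / (1 - z)).re := by exact_mod_cast this
    linarith

lemma sum_range_split (n : ℕ) (hn : 0 < n) (g : ℕ → ℝ) :
    ∑ j ∈ Finset.range n, g j = g 0 + ∑ j ∈ Finset.Ico 1 n, g j := by
  have h : Finset.range n = insert 0 (Finset.Ico 1 n) := by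
    ext x
    simp [Finset.mem_range, Finset.mem_Ico, Finset.mem_insert]
    omega
  rw [h, Finset.sum_insert (by simp)]

lemma ico_sum_cos (n : ℕ) (hn : 0 < n) (r : ℤ) (hr : ¬ ((2 * n : ℤ) ∣ r)) :
    ∑ j ∈ Finset.Ico 1 n, Real.cos (π * j * r / n) = (if Odd r then 1 else 0) - 1 := by
  have h := sum_cos_int n hn r hr
  have hs := sum_range_split n hn (fun j => Real.cos (π * j * r / n))
  have h0 : Real.cos (π * (0 : ℕ) * r / n) = 1 := by simp
  simp only [h0] at hs
  rw [h] at hs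
  linarith

lemma kernel (n : ℕ) (hn : 0 < n) (m k : ℕ) (hm : m < n) (hk : k < n) :
    1 + ∑ j ∈ Finset.Ico 1 n,
        2 * Real.cos (π * (m + 1/2) * j / n) * Real.cos (π * j * (k + 1/2) / n)
      = if m = k then (n : ℝ) else 0 := by
  have hn0 : (n : ℝ) ≠ 0 := Nat.cast_ne_zero.mpr hn.ne'
  have hterm : ∀ j ∈ Finset.Ico 1 n,
      2 * Real.cos (π * (m + 1/2) * j / n) * Real.cos (π * j * (k + 1/2) / n)
      = Real.cos (π * j * (((m : ℤ) + k + 1 : ℤ) : ℝ) / n)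
        + Real.cos (π * j * (((m : ℤ) - k : ℤ) : ℝ) / n) := by
    intro j _
    have e1 : π * (j : ℝ) * (((m : ℤ) + k + 1 : ℤ) : ℝ) / n
        = π * (m + 1/2) * j / n + π * j * (k + 1/2) / n := by push_cast; ring
    have e2 : π * (j : ℝ) * (((m : ℤ) - k : ℤ) : ℝ) / n
        = π * (m + 1/2) * j / n - π * j * (k + 1/2) / n := by push_cast; ring
    rw [e1, e2, Real.cos_add, Real.cos_sub]
    ring
  rw [Finset.sum_congr rfl hterm, Finset.sum_add_distrib]
  have hb1 : (0 : ℤ) < (m : ℤ) + k + 1 := by omega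
  have hb2 : (m : ℤ) + k + 1 < 2 * n := by omega
  have hdvd1 : ¬ ((2 * n : ℤ) ∣ ((m : ℤ) + k + 1)) := by
    rintro ⟨c, hc⟩
    have h2n : (0 : ℤ) < 2 * n := by positivity
    have hc0 : 0 < c := by nlinarith
    nlinarith
  have h1 := ico_sum_cos n hn ((m : ℤ) + k + 1) hdvd1
  by_cases hmk : m = k
  · subst hmk
    rw [if_pos rfl]
    have hodd : Odd ((m : ℤ) + m + 1) := ⟨m, by ring⟩
    rw [if_pos hodd] at h1
    have h2 : ∑ j ∈ Finset.Ico 1 n, Real.cos (π * j * (((m : ℤ) - m : ℤ) : ℝ) / n)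
        = (n : ℝ) - 1 := by
      have : ∀ j ∈ Finset.Ico 1 n,
          Real.cos (π * j * (((m : ℤ) - m : ℤ) : ℝ) / n) = 1 := by
        intro j _; simp
      rw [Finset.sum_congr rfl this, Finset.sum_const, Nat.card_Ico, nsmul_eq_mul,
        mul_one, Nat.cast_sub hn, Nat.cast_one]
    rw [h1, h2]
    ring
  · rw [if_neg hmk]
    have hb3 : -(n : ℤ) < (m : ℤ) - k := by omega
    have hb4 : (m : ℤ) - k < n := by omega
    have hb5 : (m : ℤ) - k ≠ 0 := by omega
    have hdvd2 : ¬ ((2 * n : ℤ) ∣ ((m : ℤ) - k)) := by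
      rintro ⟨c, hc⟩
      have h2n : (0 : ℤ) < 2 * n := by positivity
      have hc1 : c ≤ 0 := by nlinarith
      have hc2 : 0 ≤ c := by nlinarith
      have : c = 0 := le_antisymm hc1 hc2
      rw [this, mul_zero] at hc
      exact hb5 hc
    have h2 := ico_sum_cos n hn ((m : ℤ) - k) hdvd2
    have hpar : Odd ((m : ℤ) + k + 1) ↔ ¬ Odd ((m : ℤ) - k) := by
      rw [Int.odd_iff, Int.odd_iff]
      omega
    by_cases ho : Odd ((m : ℤ) - k)
    · rw [if_pos ho] at h2
      rw [if_neg (by rw [hpar]; exact fun h => h ho)] at h1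
      rw [h1, h2]; ring
    · rw [if_neg ho] at h2
      rw [if_pos (hpar.mpr ho)] at h1
      rw [h1, h2]; ring

/-- The type-III discrete cosine transform
`(C₃ g)_k = g_0 + 2 Σ_{j=1}^{n−1} g_j cos(π j (k+1/2)/n)`
inverts the type-II discrete cosine transform
`(C₂ f)_k = 2 Σ_{j=0}^{n−1} f_j cos(π (j+1/2) k/n)` up to the factor `2n`. -/
theorem dct_III_inverts_dct_II
    (n : ℕ) (hn : 1 ≤ n)
    (C₂ C₃ : (ℕ → ℝ) → (ℕ → ℝ))
    (hC₂ : ∀ f k, C₂ f k = 2 * ∑ j ∈ Finset.range n, f j * Real.cos (π * (j + 1/2) * k / n))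
    (hC₃ : ∀ g k, C₃ g k = g 0
        + 2 * ∑ j ∈ Finset.Ico 1 n, g j * Real.cos (π * j * (k + 1/2) / n))
    (f : ℕ → ℝ) :
    ∀ k < n, C₃ (C₂ f) k = 2 * n * f k := by
  intro k hk
  rw [hC₃]
  simp only [hC₂, Nat.cast_zero, mul_zero, zero_div, Real.cos_zero, mul_one]
  have hswap : ∑ j ∈ Finset.Ico 1 n,
        (2 * ∑ m ∈ Finset.range n, f m * Real.cos (π * (m + 1/2) * j / n))
          * Real.cos (π * j * (k + 1/2) / n)
      = ∑ m ∈ Finset.range n, f m * ∑ j ∈ Finset.Ico 1 n,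
          2 * Real.cos (π * (m + 1/2) * j / n) * Real.cos (π * j * (k + 1/2) / n) := by
    calc ∑ j ∈ Finset.Ico 1 n,
        (2 * ∑ m ∈ Finset.range n, f m * Real.cos (π * (m + 1/2) * j / n))
          * Real.cos (π * j * (k + 1/2) / n)
        = ∑ j ∈ Finset.Ico 1 n, ∑ m ∈ Finset.range n,
            f m * (2 * Real.cos (π * (m + 1/2) * j / n)
              * Real.cos (π * j * (k + 1/2) / n)) := by
          refine Finset.sum_congr rfl fun j _ => ?_
          rw [Finset.mul_sum, Finset.sum_mul]
          exact Finset.sum_congr rfl fun m _ => by ring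
      _ = ∑ m ∈ Finset.range n, ∑ j ∈ Finset.Ico 1 n,
            f m * (2 * Real.cos (π * (m + 1/2) * j / n)
              * Real.cos (π * j * (k + 1/2) / n)) := Finset.sum_comm
      _ = _ := Finset.sum_congr rfl fun m _ => by rw [Finset.mul_sum]
  rw [hswap]
  have hcomb : ∑ j ∈ Finset.range n, f j
      + ∑ m ∈ Finset.range n, f m * ∑ j ∈ Finset.Ico 1 n,
          2 * Real.cos (π * (m + 1/2) * j / n) * Real.cos (π * j * (k + 1/2) / n)
      = ∑ m ∈ Finset.range n, f m * (1 + ∑ j ∈ Finset.Ico 1 n,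
          2 * Real.cos (π * (m + 1/2) * j / n) * Real.cos (π * j * (k + 1/2) / n)) := by
    rw [← Finset.sum_add_distrib]
    exact Finset.sum_congr rfl fun m _ => by ring
  have hker : ∑ m ∈ Finset.range n, f m * (1 + ∑ j ∈ Finset.Ico 1 n,
        2 * Real.cos (π * (m + 1/2) * j / n) * Real.cos (π * j * (k + 1/2) / n))
      = (n : ℝ) * f k := by
    have : ∀ m ∈ Finset.range n, f m * (1 + ∑ j ∈ Finset.Ico 1 n,
        2 * Real.cos (π * (m + 1/2) * j / n) * Real.cos (π * j * (k + 1/2) / n))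
        = if m = k then f m * n else 0 := by
      intro m hmem
      rw [kernel n hn m k (Finset.mem_range.mp hmem) hk]
      by_cases h : m = k <;> simp [h]
    rw [Finset.sum_congr rfl this, Finset.sum_ite_eq' (Finset.range n) k,
      if_pos (Finset.mem_range.mpr hk)]
    ring
  linarith
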